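/- arXiv:2410.06903 — 5 statements merged into one kernel-verified Lean document; each statement's English description precedes it below -/
import Mathlib

section
/- Let n ∈ ℕ and ω ≥ (n+1)π. Then the Chebyshev error satisfies E^c(n,ω) = 1, and this value is attained by the zero rational function r ≡ 0. -/
open Set

/-- Uniform error of the rational function `p/q` (evaluated on the imaginary
interval `i[-1,1]`) as an approximation to `exp(iωx)`, `x ∈ [-1,1]`. -/
noncomputable def ratErr (ω : ℝ) (p q : Polynomial ℂ) : ℝ :=
  ⨆ x : Set.Icc (-1:ℝ) 1,
    ‖p.eval (Complex.I * ((x : ℝ) : ℂ)) / q.eval (Complex.I * ((x : ℝ) : ℂ)) -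
      Complex.exp (Complex.I * (ω : ℂ) * ((x : ℝ) : ℂ))‖

/-- Error of rational Chebyshev approximation of degree `n` to `exp(iωx)` on `x ∈ [-1,1]`. -/
noncomputable def chebErr (n : ℕ) (ω : ℝ) : ℝ :=
  sInf { E : ℝ | ∃ p q : Polynomial ℂ, p.natDegree ≤ n ∧ q.natDegree ≤ n ∧
    (∀ x : ℝ, x ∈ Set.Icc (-1:ℝ) 1 → q.eval (Complex.I * (x : ℂ)) ≠ 0) ∧
    E = ratErr ω p q }

/-- Error of unitary best approximation of degree `n` to `exp(iωx)` on `x ∈ [-1,1]`. -/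
noncomputable def unitErr (n : ℕ) (ω : ℝ) : ℝ :=
  sInf { E : ℝ | ∃ p q : Polynomial ℂ, p.natDegree ≤ n ∧ q.natDegree ≤ n ∧
    (∀ x : ℝ, q.eval (Complex.I * (x : ℂ)) ≠ 0 ∧
      ‖p.eval (Complex.I * (x : ℂ)) / q.eval (Complex.I * (x : ℂ))‖ = 1) ∧
    E = ratErr ω p q }

private 
lemma pos_re_aux (a b u : ℂ) (hb : b ≠ 0) (hu : ‖u‖ = 1)
    (h : ‖a / b - u‖ < 1) :
    0 < (a * (starRingEnd ℂ) b * (starRingEnd ℂ) u).re := by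
  set r := a / b with hr
  have hns : Complex.normSq (r - u) < 1 := by
    rw [← Complex.sq_norm]
    calc ‖r - u‖ ^ 2 ≤ ‖r - u‖ * 1 := by
          rw [sq]; exact mul_le_mul_of_nonneg_left h.le (norm_nonneg _)
      _ < 1 := by simpa using h
  rw [Complex.normSq_sub] at hns
  have hu2 : Complex.normSq u = 1 := by
    rw [← Complex.sq_norm, hu]; norm_num
  have hr0 : r ≠ 0 := by
    intro h0
    rw [h0, zero_sub, norm_neg, hu] at h
    exact lt_irrefl 1 h
  have hnr : 0 < Complex.normSq r := Complex.normSq_pos.mpr hr0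
  have hru : 0 < (r * (starRingEnd ℂ) u).re := by linarith
  have ha : a = r * b := (div_mul_cancel₀ a hb).symm
  have hkey : a * (starRingEnd ℂ) b * (starRingEnd ℂ) u
      = r * (starRingEnd ℂ) u * ((Complex.normSq b : ℝ) : ℂ) := by
    rw [ha, ← Complex.mul_conj]; ring
  rw [hkey, Complex.mul_re]
  simp only [Complex.ofReal_re, Complex.ofReal_im, mul_zero, sub_zero]
  exact mul_pos hru (Complex.normSq_pos.mpr hb)

private lemma exists_H (n : ℕ) (p q : Polynomial ℂ) (hp : p.natDegree ≤ n) (hq : q.natDegree ≤ n) :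
    ∃ H : Polynomial ℂ, H.natDegree ≤ 2 * n ∧ ∀ x : ℝ,
      H.eval (x : ℂ) =
        ((2 * (p.eval (Complex.I * x) * (starRingEnd ℂ) (q.eval (Complex.I * x))).re : ℝ) : ℂ) := by
  classical
  set σ := starRingEnd ℂ with hσ
  set A := p.comp (Polynomial.C Complex.I * Polynomial.X) with hA
  set B := (q.map σ).comp (Polynomial.C (-Complex.I) * Polynomial.X) with hB
  have hAd : A.natDegree ≤ n := by
    rw [hA, Polynomial.natDegree_comp, Polynomial.natDegree_C_mul_X _ Complex.I_ne_zero, mul_one]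
    exact hp
  have hBd : B.natDegree ≤ n := by
    rw [hB, Polynomial.natDegree_comp, Polynomial.natDegree_C_mul_X _ (neg_ne_zero.mpr Complex.I_ne_zero),
      mul_one, Polynomial.natDegree_map_eq_of_injective (starRingEnd ℂ).injective]
    exact hq
  have hABd : (A * B).natDegree ≤ 2 * n := by
    calc (A * B).natDegree ≤ A.natDegree + B.natDegree := Polynomial.natDegree_mul_le
      _ ≤ 2 * n := by omega
  refine ⟨A * B + (A * B).map σ, ?_, ?_⟩
  · refine le_trans (Polynomial.natDegree_add_le _ _) ?_
    rw [Polynomial.natDegree_map_eq_of_injective (starRingEnd ℂ).injective]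
    omega
  · intro x
    have hAx : A.eval (x : ℂ) = p.eval (Complex.I * x) := by
      rw [hA, Polynomial.eval_comp]; simp
    have hBx : B.eval (x : ℂ) = σ (q.eval (Complex.I * x)) := by
      rw [hB, Polynomial.eval_comp]
      have : (Polynomial.C (-Complex.I) * Polynomial.X).eval (x : ℂ) = σ (Complex.I * x) := by
        simp [hσ, Complex.conj_ofReal]
      rw [this, Polynomial.eval_map, Polynomial.eval₂_at_apply]
    have hmap : ((A * B).map σ).eval (x : ℂ) = σ ((A * B).eval (x : ℂ)) := by
      have hx : (x : ℂ) = σ (x : ℂ) := by simp [hσ, Complex.conj_ofReal]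
      rw [Polynomial.eval_map]
      conv_lhs => rw [hx]
      rw [Polynomial.eval₂_at_apply]
    rw [Polynomial.eval_add, hmap, Polynomial.eval_mul, hAx, hBx,
      Complex.add_conj]

private lemma one_le_ratErr (n : ℕ) (ω : ℝ) (hω : ((n : ℝ) + 1) * Real.pi ≤ ω)
    (p q : Polynomial ℂ) (hp : p.natDegree ≤ n) (hq : q.natDegree ≤ n)
    (hqz : ∀ x : ℝ, x ∈ Set.Icc (-1:ℝ) 1 → q.eval (Complex.I * (x : ℂ)) ≠ 0) :
    1 ≤ ratErr ω p q := by
  by_contra hlt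
  push_neg at hlt
  have hπ := Real.pi_pos
  have hω0 : 0 < ω := lt_of_lt_of_le (by positivity) hω
  -- the error function on the interval
  set g : Set.Icc (-1:ℝ) 1 → ℝ := fun x =>
    ‖p.eval (Complex.I * ((x : ℝ) : ℂ)) / q.eval (Complex.I * ((x : ℝ) : ℂ)) -
      Complex.exp (Complex.I * (ω : ℂ) * ((x : ℝ) : ℂ))‖ with hg
  have hgc : Continuous g := by
    have h0 : Continuous fun x : Set.Icc (-1:ℝ) 1 => (Complex.I * ((x : ℝ) : ℂ)) := by
      fun_prop
    have h1 : Continuous fun x : Set.Icc (-1:ℝ) 1 => p.eval (Complex.I * ((x : ℝ) : ℂ)) :=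
      (Polynomial.continuous p).comp h0
    have h2 : Continuous fun x : Set.Icc (-1:ℝ) 1 => q.eval (Complex.I * ((x : ℝ) : ℂ)) :=
      (Polynomial.continuous q).comp h0
    have h3 : Continuous fun x : Set.Icc (-1:ℝ) 1 =>
        Complex.exp (Complex.I * (ω : ℂ) * ((x : ℝ) : ℂ)) := by fun_prop
    exact continuous_norm.comp
      ((h1.div h2 (fun x => hqz x x.2)).sub h3)
  have hbdd : BddAbove (Set.range g) := (isCompact_range hgc).bddAbove
  have hpt0 : ∀ x : ℝ, x ∈ Set.Icc (-1:ℝ) 1 →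
      ‖p.eval (Complex.I * (x : ℂ)) / q.eval (Complex.I * (x : ℂ)) -
        Complex.exp (Complex.I * (ω : ℂ) * (x : ℂ))‖ < 1 := by
    intro x hx
    refine lt_of_le_of_lt ?_ hlt
    exact le_ciSup hbdd (⟨x, hx⟩ : Set.Icc (-1:ℝ) 1)
  -- the alternation points
  set N := 2 * n + 2 with hN
  set t : ℕ → ℝ := fun k => ((k : ℝ) - ((n : ℝ) + 1)) * Real.pi / ω with ht
  have ht_mem : ∀ k, k ≤ N → t k ∈ Set.Icc (-1:ℝ) 1 := by
    intro k hk
    have hk' : (k : ℝ) ≤ 2 * (n : ℝ) + 2 := by exact_mod_cast hk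
    have hk0 : (0 : ℝ) ≤ (k : ℝ) := Nat.cast_nonneg k
    constructor
    · rw [le_div_iff₀ hω0]; nlinarith
    · rw [div_le_one hω0]; nlinarith
  have ht_lt : ∀ k, t k < t (k + 1) := by
    intro k
    rw [ht]
    simp only
    rw [div_lt_div_iff_of_pos_right hω0]
    have : (0:ℝ) < Real.pi := hπ
    push_cast
    nlinarith
  have ht_mono : StrictMono t := strictMono_nat_of_lt_succ ht_lt
  -- exp value at t k
  have hexp : ∀ k : ℕ, Complex.exp (Complex.I * (ω : ℂ) * ((t k : ℝ) : ℂ))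
      = ((-1 : ℂ)) ^ (k + n + 1) := by
    intro k
    have hωC : (ω : ℂ) ≠ 0 := by exact_mod_cast hω0.ne'
    have harg : Complex.I * (ω : ℂ) * ((t k : ℝ) : ℂ)
        = (((k : ℤ) - ((n : ℤ) + 1) : ℤ) : ℂ) * ((Real.pi : ℂ) * Complex.I) := by
      rw [ht]
      push_cast
      field_simp
    rw [harg, Complex.exp_int_mul, Complex.exp_pi_mul_I]
    have hm : ((k : ℤ) - ((n : ℤ) + 1)) = ((k + n + 1 : ℕ) : ℤ) - 2 * ((n : ℤ) + 1) := by
      push_cast; ring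
    rw [hm, zpow_sub₀ (by norm_num : (-1 : ℂ) ≠ 0), zpow_natCast]
    have h2 : ((-1 : ℂ)) ^ (2 * ((n : ℤ) + 1)) = 1 := by
      rw [zpow_mul]
      norm_num
    rw [h2, div_one]
  -- the real function f
  set f : ℝ → ℝ := fun x =>
    (p.eval (Complex.I * (x : ℂ)) * (starRingEnd ℂ) (q.eval (Complex.I * (x : ℂ)))).re with hf
  have hfc : Continuous f := by
    have h0 : Continuous fun x : ℝ => (Complex.I * (x : ℂ)) := by fun_prop
    have h1 : Continuous fun x : ℝ => p.eval (Complex.I * (x : ℂ)) :=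
      (Polynomial.continuous p).comp h0
    have h2 : Continuous fun x : ℝ => (starRingEnd ℂ) (q.eval (Complex.I * (x : ℂ))) :=
      Complex.continuous_conj.comp ((Polynomial.continuous q).comp h0)
    exact Complex.continuous_re.comp (h1.mul h2)
  -- sign alternation
  set s : ℕ → ℝ := fun k => (-1 : ℝ) ^ (k + n + 1) with hs
  have hpt : ∀ k, k ≤ N → 0 < f (t k) * s k := by
    intro k hk
    have hmem := ht_mem k hk
    have hq0 := hqz (t k) hmem
    have habs := hpt0 (t k) hmem
    rw [hexp k] at habs
    have hu : ‖((-1 : ℂ)) ^ (k + n + 1)‖ = 1 := by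
      rw [norm_pow]; simp
    have := pos_re_aux _ _ _ hq0 hu habs
    have hcu : (starRingEnd ℂ) (((-1 : ℂ)) ^ (k + n + 1)) = ((s k : ℝ) : ℂ) := by
      rw [hs]; push_cast; rw [map_pow]; simp
    rw [hcu, Complex.mul_re] at this
    simpa [hf] using this
  -- roots between alternation points
  have hroot : ∀ k, k < N → ∃ y, y ∈ Set.Ioo (t k) (t (k + 1)) ∧ f y = 0 := by
    intro k hkN
    have h1 := hpt k (Nat.le_of_lt hkN)
    have h2 := hpt (k + 1) hkN
    have hs1 : s (k + 1) = - s k := by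
      rw [hs]; simp only
      have : k + 1 + n + 1 = (k + n + 1) + 1 := by omega
      rw [this, pow_succ]
      ring
    rcases neg_one_pow_eq_or ℝ (k + n + 1) with hsk | hsk
    · -- s k = 1 : f (t k) > 0 > f (t (k+1))
      have hsk' : s k = 1 := hsk
      have hfk : 0 < f (t k) := by rw [hsk', mul_one] at h1; exact h1
      have hfk1 : f (t (k + 1)) < 0 := by
        rw [hs1, hsk'] at h2
        nlinarith
      have hsub := intermediate_value_Ioo' (ht_lt k).le hfc.continuousOn
      have h0 : (0 : ℝ) ∈ Set.Ioo (f (t (k + 1))) (f (t k)) := ⟨hfk1, hfk⟩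
      obtain ⟨y, hy, hy0⟩ := hsub h0
      exact ⟨y, hy, hy0⟩
    · have hsk' : s k = -1 := hsk
      have hfk : f (t k) < 0 := by rw [hsk'] at h1; nlinarith
      have hfk1 : 0 < f (t (k + 1)) := by
        rw [hs1, hsk'] at h2
        nlinarith
      have hsub := intermediate_value_Ioo (ht_lt k).le hfc.continuousOn
      have h0 : (0 : ℝ) ∈ Set.Ioo (f (t k)) (f (t (k + 1))) := ⟨hfk, hfk1⟩
      obtain ⟨y, hy, hy0⟩ := hsub h0
      exact ⟨y, hy, hy0⟩
  choose y hy1 hy2 using hroot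
  set Y : Fin N → ℝ := fun k => y k.1 k.2 with hY
  have hYmono : StrictMono Y := by
    intro i j hij
    have h1 : Y i < t (i.1 + 1) := (hy1 i.1 i.2).2
    have h2 : t j.1 < Y j := (hy1 j.1 j.2).1
    have h3 : t (i.1 + 1) ≤ t j.1 := ht_mono.monotone (by omega)
    linarith
  obtain ⟨H, hHdeg, hHeval⟩ := exists_H n p q hp hq
  have hH0 : H = 0 := by
    apply Polynomial.eq_zero_of_natDegree_lt_card_of_eval_eq_zero H
      (f := fun k : Fin N => ((Y k : ℝ) : ℂ))
    · intro i j hij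
      exact hYmono.injective (Complex.ofReal_inj.mp hij)
    · intro i
      rw [hHeval]
      have hz : (p.eval (Complex.I * ((Y i : ℝ) : ℂ)) *
          (starRingEnd ℂ) (q.eval (Complex.I * ((Y i : ℝ) : ℂ)))).re = 0 := hy2 i.1 i.2
      rw [hz]
      norm_num
    · rw [Fintype.card_fin]
      omega
  -- contradiction at t 0
  have h00 := hpt 0 (Nat.zero_le N)
  have hft : (p.eval (Complex.I * ((t 0 : ℝ) : ℂ)) *
      (starRingEnd ℂ) (q.eval (Complex.I * ((t 0 : ℝ) : ℂ)))).re = 0 := by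
    have heq := hHeval (t 0)
    rw [hH0] at heq
    simp only [Polynomial.eval_zero] at heq
    have h2 : (2 * (p.eval (Complex.I * ((t 0 : ℝ) : ℂ)) *
        (starRingEnd ℂ) (q.eval (Complex.I * ((t 0 : ℝ) : ℂ)))).re : ℝ) = 0 := by
      exact_mod_cast heq.symm
    linarith
  have : f (t 0) = 0 := hft
  rw [this, zero_mul] at h00
  exact lt_irrefl 0 h00

/-- for `ω ≥ (n+1)π` the Chebyshev error is `1`, attained by `r ≡ 0`. -/
theorem chebErr_eq_one_of_large_freq (n : ℕ) (ω : ℝ) (hω : ((n : ℝ) + 1) * Real.pi ≤ ω) :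
    chebErr n ω = 1 ∧ ratErr ω 0 1 = 1 := by
  have hne : Nonempty (Set.Icc (-1:ℝ) 1) := ⟨⟨0, by norm_num⟩⟩
  have hrat : ratErr ω 0 1 = 1 := by
    rw [ratErr]
    have hbody : ∀ x : Set.Icc (-1:ℝ) 1,
        ‖(0 : Polynomial ℂ).eval (Complex.I * ((x : ℝ) : ℂ)) /
            (1 : Polynomial ℂ).eval (Complex.I * ((x : ℝ) : ℂ)) -
          Complex.exp (Complex.I * (ω : ℂ) * ((x : ℝ) : ℂ))‖ = 1 := by
      intro x
      simp only [Polynomial.eval_zero, Polynomial.eval_one, zero_div, zero_sub, norm_neg]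
      rw [Complex.norm_exp]
      have : (Complex.I * (ω : ℂ) * ((x : ℝ) : ℂ)).re = 0 := by
        simp [Complex.mul_re, Complex.mul_im]
      rw [this, Real.exp_zero]
    calc (⨆ x : Set.Icc (-1:ℝ) 1,
        ‖(0 : Polynomial ℂ).eval (Complex.I * ((x : ℝ) : ℂ)) /
            (1 : Polynomial ℂ).eval (Complex.I * ((x : ℝ) : ℂ)) -
          Complex.exp (Complex.I * (ω : ℂ) * ((x : ℝ) : ℂ))‖)
        = ⨆ _ : Set.Icc (-1:ℝ) 1, (1:ℝ) := by
          congr 1; funext x; exact hbody x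
      _ = 1 := ciSup_const
  refine ⟨?_, hrat⟩
  set S := { E : ℝ | ∃ p q : Polynomial ℂ, p.natDegree ≤ n ∧ q.natDegree ≤ n ∧
    (∀ x : ℝ, x ∈ Set.Icc (-1:ℝ) 1 → q.eval (Complex.I * (x : ℂ)) ≠ 0) ∧
    E = ratErr ω p q } with hS
  have h1S : (1 : ℝ) ∈ S := by
    refine ⟨0, 1, by simp, by simp, fun x hx => by simp, hrat.symm⟩
  have hlb : ∀ E ∈ S, (1 : ℝ) ≤ E := by
    rintro E ⟨p, q, hp, hq, hqz, rfl⟩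
    exact one_le_ratErr n ω hω p q hp hq hqz
  rw [chebErr, ← hS]
  exact le_antisymm (csInf_le ⟨1, hlb⟩ h1S) (le_csInf ⟨1, h1S⟩ hlb)
end

section
/- Let n ∈ ℕ and 0 ≤ ω₁ ≤ ω₂. Then the Chebyshev error is monotone in the frequency: E^c(n,ω₁) ≤ E^c(n,ω₂). -/
open Set

/-- the Chebyshev error is monotone in the frequency. -/
theorem chebErr_monotone (n : ℕ) (ω₁ ω₂ : ℝ) (h₁ : 0 ≤ ω₁) (h₂ : ω₁ ≤ ω₂) :
    chebErr n ω₁ ≤ chebErr n ω₂ := by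
  by_cases hω : ω₂ = 0
  · have h10 : ω₁ = 0 := le_antisymm (hω ▸ h₂) h₁
    simp [h10, hω]
  · have hω2 : 0 < ω₂ := lt_of_le_of_ne (h₁.trans h₂) (Ne.symm hω)
    set c : ℝ := ω₁ / ω₂ with hc
    have hc0 : 0 ≤ c := div_nonneg h₁ hω2.le
    have hc1 : c ≤ 1 := div_le_one_of_le₀ h₂ hω2.le
    unfold chebErr
    apply le_csInf
    · exact ⟨ratErr ω₂ 1 1, 1, 1, by simp, by simp, by simp, rfl⟩
    rintro E ⟨p, q, hp, hq, hq0, rfl⟩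
    set p' := p.comp (Polynomial.C (c : ℂ) * Polynomial.X) with hp'
    set q' := q.comp (Polynomial.C (c : ℂ) * Polynomial.X) with hq'
    have hdeg : ∀ r : Polynomial ℂ, r.natDegree ≤ n →
        (r.comp (Polynomial.C (c : ℂ) * Polynomial.X)).natDegree ≤ n := by
      intro r hr
      calc (r.comp (Polynomial.C (c : ℂ) * Polynomial.X)).natDegree
          ≤ r.natDegree * (Polynomial.C (c : ℂ) * Polynomial.X).natDegree :=
            Polynomial.natDegree_comp_le
        _ ≤ r.natDegree * 1 := by
            gcongr
            calc (Polynomial.C (c : ℂ) * Polynomial.X).natDegree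
                ≤ (Polynomial.C (c : ℂ)).natDegree + Polynomial.X.natDegree :=
                  Polynomial.natDegree_mul_le
              _ ≤ 1 := by simp
        _ ≤ n := by simpa using hr
    have hmemc : ∀ x : ℝ, x ∈ Icc (-1:ℝ) 1 → c * x ∈ Icc (-1:ℝ) 1 := by
      intro x hx
      constructor
      · nlinarith [hx.1, hx.2]
      · nlinarith [hx.1, hx.2]
    have heval : ∀ (r : Polynomial ℂ) (x : ℝ),
        (r.comp (Polynomial.C (c : ℂ) * Polynomial.X)).eval (Complex.I * (x : ℂ)) =
          r.eval (Complex.I * ((c * x : ℝ) : ℂ)) := by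
      intro r x
      rw [Polynomial.eval_comp]
      simp only [Polynomial.eval_mul, Polynomial.eval_C, Polynomial.eval_X]
      congr 1
      push_cast
      ring
    have hq0' : ∀ x : ℝ, x ∈ Icc (-1:ℝ) 1 → q'.eval (Complex.I * (x : ℂ)) ≠ 0 := by
      intro x hx
      rw [hq', heval]
      exact hq0 _ (hmemc x hx)
    have key : ratErr ω₁ p' q' ≤ ratErr ω₂ p q := by
      unfold ratErr
      have hcont : Continuous fun x : Icc (-1:ℝ) 1 =>
          ‖p.eval (Complex.I * ((x : ℝ) : ℂ)) / q.eval (Complex.I * ((x : ℝ) : ℂ)) -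
            Complex.exp (Complex.I * (ω₂ : ℂ) * ((x : ℝ) : ℂ))‖ := by
        have hz : Continuous fun x : Icc (-1:ℝ) 1 => Complex.I * ((x : ℝ) : ℂ) :=
          continuous_const.mul (Complex.continuous_ofReal.comp continuous_subtype_val)
        exact continuous_norm.comp
          (((p.continuous.comp hz).div (q.continuous.comp hz)
            (fun x => hq0 x x.2)).sub
            (Complex.continuous_exp.comp (continuous_const.mul
              (Complex.continuous_ofReal.comp continuous_subtype_val))))
      have hbdd : BddAbove (Set.range fun x : Icc (-1:ℝ) 1 =>
          ‖p.eval (Complex.I * ((x : ℝ) : ℂ)) / q.eval (Complex.I * ((x : ℝ) : ℂ)) -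
            Complex.exp (Complex.I * (ω₂ : ℂ) * ((x : ℝ) : ℂ))‖) :=
        (isCompact_range hcont).bddAbove
      haveI : Nonempty (Icc (-1:ℝ) 1) := ⟨⟨0, by norm_num⟩⟩
      apply ciSup_le
      intro x
      have hcx : c * (x : ℝ) ∈ Icc (-1:ℝ) 1 := hmemc _ x.2
      have hle := le_ciSup hbdd (⟨c * (x : ℝ), hcx⟩ : Icc (-1:ℝ) 1)
      refine le_trans (le_of_eq ?_) hle
      simp only [hp', hq', heval]
      congr 2
      rw [Complex.ofReal_mul]
      have hωc : (ω₂ : ℂ) ≠ 0 := Complex.ofReal_ne_zero.mpr hω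
      have : (ω₂ : ℂ) * (c : ℂ) = (ω₁ : ℂ) := by
        rw [hc]
        push_cast
        field_simp
      refine congrArg Complex.exp ?_
      calc Complex.I * (ω₁ : ℂ) * (x : ℂ) = Complex.I * ((ω₂ : ℂ) * (c : ℂ)) * (x : ℂ) := by
            rw [this]
        _ = Complex.I * (ω₂ : ℂ) * ((c : ℂ) * (x : ℂ)) := by ring
    have hbelow : BddBelow { E : ℝ | ∃ p q : Polynomial ℂ, p.natDegree ≤ n ∧ q.natDegree ≤ n ∧
        (∀ x : ℝ, x ∈ Set.Icc (-1:ℝ) 1 → q.eval (Complex.I * (x : ℂ)) ≠ 0) ∧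
        E = ratErr ω₁ p q } := by
      refine ⟨0, ?_⟩
      rintro E ⟨p, q, -, -, -, rfl⟩
      exact Real.iSup_nonneg fun x => norm_nonneg _
    have hmem' : ratErr ω₁ p' q' ∈ { E : ℝ | ∃ p q : Polynomial ℂ, p.natDegree ≤ n ∧
        q.natDegree ≤ n ∧
        (∀ x : ℝ, x ∈ Set.Icc (-1:ℝ) 1 → q.eval (Complex.I * (x : ℂ)) ≠ 0) ∧
        E = ratErr ω₁ p q } :=
      ⟨p', q', hdeg p hp, hdeg q hq, hq0', rfl⟩
    exact (csInf_le hbelow hmem').trans key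
end

section
/- Let n ∈ ℕ and ω > 0, and let p, q be complex polynomials of degree ≤ n with q(ix) ≠ 0 for all x ∈ [-1,1] such that sup_{x∈[-1,1]} |p(ix)/q(ix) − exp(iωx)| = E^c(n,ω) (i.e., p/q is a Chebyshev approximant). Then p/q is not unitary: there exists x ∈ ℝ with q(ix) = 0 or |p(ix)/q(ix)| ≠ 1. -/
open Set

lemma abs_combo (l : ℝ) (r e : ℂ) (hr : ‖r‖ = 1) (he : ‖e‖ = 1) :
    ‖((1-l : ℝ) : ℂ) * r - e‖ ^ 2 = (1-l) * ‖r-e‖ ^ 2 + l ^ 2 := by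
  have ha : r.re ^ 2 + r.im ^ 2 = 1 := by
    have h := Complex.sq_norm r
    rw [hr] at h
    simpa [Complex.normSq_apply, sq] using h.symm
  have hc : e.re ^ 2 + e.im ^ 2 = 1 := by
    have h := Complex.sq_norm e
    rw [he] at h
    simpa [Complex.normSq_apply, sq] using h.symm
  rw [Complex.sq_norm, Complex.sq_norm]
  simp only [Complex.normSq_apply, Complex.sub_re, Complex.sub_im, Complex.mul_re,
    Complex.mul_im, Complex.ofReal_re, Complex.ofReal_im]
  linear_combination (l^2 - l) * ha + l * hc

lemma global_eq (ω : ℝ) (p q : Polynomial ℂ)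
    (h : ∀ x : ℝ, x ∈ Set.Icc (-1:ℝ) 1 →
      p.eval (Complex.I * (x:ℂ)) = q.eval (Complex.I * (x:ℂ)) * Complex.exp (Complex.I * (ω:ℂ) * (x:ℂ))) :
    ∀ w : ℂ, p.eval w = q.eval w * Complex.exp ((ω:ℂ) * w) := by
  set F : ℂ → ℂ := fun z => p.eval (Complex.I * z) - q.eval (Complex.I * z) * Complex.exp (Complex.I * (ω:ℂ) * z) with hFdef
  have hF : Differentiable ℂ F := by
    apply Differentiable.sub
    · exact (Polynomial.differentiable p).comp (differentiable_id.const_mul Complex.I)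
    · exact ((Polynomial.differentiable q).comp (differentiable_id.const_mul Complex.I)).mul
        (Complex.differentiable_exp.comp ((differentiable_id.const_mul (Complex.I * (ω:ℂ)))))
  have hFa : AnalyticOnNhd ℂ F Set.univ := hF.differentiableOn.analyticOnNhd isOpen_univ
  have hfreq : ∃ᶠ z in nhdsWithin (0:ℂ) {(0:ℂ)}ᶜ, F z = 0 := by
    have htu : Filter.Tendsto (fun k : ℕ => ((1/(k+1:ℝ) : ℝ) : ℂ)) Filter.atTop (nhdsWithin (0:ℂ) {(0:ℂ)}ᶜ) := by
      apply tendsto_nhdsWithin_of_tendsto_nhds_of_eventually_within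
      · have : Filter.Tendsto (fun k : ℕ => (1/(k+1:ℝ) : ℝ)) Filter.atTop (nhds 0) :=
          tendsto_one_div_add_atTop_nhds_zero_nat
        simpa [Function.comp_def] using (Complex.continuous_ofReal.tendsto 0).comp this
      · filter_upwards with k
        simp only [Set.mem_compl_iff, Set.mem_singleton_iff]
        intro hk
        have : (1/(k+1:ℝ) : ℝ) = 0 := by exact_mod_cast hk
        have hk1 : (0:ℝ) < 1/(k+1:ℝ) := by positivity
        linarith
    apply htu.frequently
    apply Filter.Frequently.of_forall
    intro k
    have hk1 : (0:ℝ) < 1/(k+1:ℝ) := by positivity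
    have hk2 : (1/(k+1:ℝ) : ℝ) ≤ 1 := by
      rw [div_le_one (by positivity)]
      linarith [Nat.cast_nonneg (α := ℝ) k]
    have := h (1/(k+1:ℝ)) ⟨by linarith, hk2⟩
    simp only [hFdef]
    rw [this]; ring
  have hF0 : ∀ z : ℂ, F z = 0 := fun z =>
    hFa.eqOn_zero_of_preconnected_of_frequently_eq_zero isPreconnected_univ (Set.mem_univ 0)
      hfreq (Set.mem_univ z)
  intro w
  have h1 := hF0 (-Complex.I * w)
  simp only [hFdef] at h1
  have e1 : Complex.I * (-Complex.I * w) = w := by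
    have : Complex.I * Complex.I = -1 := Complex.I_mul_I
    ring_nf
    rw [Complex.I_sq]; ring
  have e2 : Complex.I * (ω:ℂ) * (-Complex.I * w) = (ω:ℂ) * w := by
    ring_nf
    rw [Complex.I_sq]; ring
  rw [e1, e2] at h1
  exact sub_eq_zero.mp h1

lemma q_eq_zero (ω : ℝ) (hω : 0 < ω) (p q : Polynomial ℂ)
    (h : ∀ w : ℂ, p.eval w = q.eval w * Complex.exp ((ω:ℂ) * w)) : q = 0 := by
  have hpq : p = q := by
    have hroot : ∀ k : ℕ, (p - q).IsRoot (((2*Real.pi*k/ω : ℝ):ℂ) * Complex.I) := by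
      intro k
      have hw := h (((2*Real.pi*k/ω : ℝ):ℂ) * Complex.I)
      have hexp : Complex.exp ((ω:ℂ) * (((2*Real.pi*k/ω : ℝ):ℂ) * Complex.I)) = 1 := by
        have e3 : (ω:ℂ) * (((2*Real.pi*k/ω : ℝ):ℂ) * Complex.I) = (k:ℂ) * (2*(Real.pi:ℂ)*Complex.I) := by
          have hω' : (ω:ℂ) ≠ 0 := by exact_mod_cast hω.ne'
          push_cast
          field_simp
        rw [e3]
        exact_mod_cast Complex.exp_int_mul_two_pi_mul_I k
      rw [hexp, mul_one] at hw
      simp only [Polynomial.IsRoot, Polynomial.eval_sub, hw, sub_self]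
    have hinf : {x : ℂ | (p - q).IsRoot x}.Infinite := by
      apply Set.infinite_of_injective_forall_mem
        (f := fun k : ℕ => ((2*Real.pi*k/ω : ℝ):ℂ) * Complex.I)
      · intro a b hab
        have h1 : ((2*Real.pi*a/ω : ℝ):ℂ) = ((2*Real.pi*b/ω : ℝ):ℂ) :=
          mul_right_cancel₀ Complex.I_ne_zero hab
        have h2 : (2*Real.pi*a/ω : ℝ) = (2*Real.pi*b/ω : ℝ) := by exact_mod_cast h1
        have hω' : ω ≠ 0 := hω.ne'
        field_simp [hω'] at h2
        exact_mod_cast h2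
      · exact hroot
    exact sub_eq_zero.mp (Polynomial.eq_zero_of_infinite_isRoot _ hinf)
  apply Polynomial.eq_zero_of_infinite_isRoot
  have hsub : (Complex.ofReal '' Set.Ioo (0:ℝ) 1) ⊆ {x : ℂ | q.IsRoot x} := by
    rintro _ ⟨t, ht, rfl⟩
    have hw := h (t:ℂ)
    rw [hpq] at hw
    have hexp : Complex.exp ((ω:ℂ) * (t:ℂ)) ≠ 1 := by
      have e4 : (ω:ℂ) * (t:ℂ) = ((ω*t:ℝ):ℂ) := by push_cast; ring
      rw [e4, ← Complex.ofReal_exp]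
      intro hcon
      have : Real.exp (ω*t) = 1 := by exact_mod_cast hcon
      nlinarith [Real.add_one_le_exp (ω*t), hω, ht.1, ht.2]
    have : q.eval (t:ℂ) * (Complex.exp ((ω:ℂ) * (t:ℂ)) - 1) = 0 := by
      rw [mul_sub, ← hw]; ring
    rcases mul_eq_zero.mp this with h5 | h5
    · exact h5
    · exact absurd (sub_eq_zero.mp h5) hexp
  exact Set.Infinite.mono hsub
    ((Set.Ioo_infinite zero_lt_one).image (Complex.ofReal_injective.injOn))

noncomputable def rfun (p q : Polynomial ℂ) (x : ℝ) : ℂ :=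
  p.eval (Complex.I * (x:ℂ)) / q.eval (Complex.I * (x:ℂ))

noncomputable def efun (ω : ℝ) (x : ℝ) : ℂ := Complex.exp (Complex.I * (ω:ℂ) * (x:ℂ))

lemma ratErr_eq (ω : ℝ) (p q : Polynomial ℂ) :
    ratErr ω p q = ⨆ z : Set.Icc (-1:ℝ) 1, ‖rfun p q z - efun ω z‖ := rfl

lemma ratErr_C_mul (ω : ℝ) (c : ℂ) (p q : Polynomial ℂ) :
    ratErr ω (Polynomial.C c * p) q =
      ⨆ z : Set.Icc (-1:ℝ) 1, ‖c * rfun p q z - efun ω z‖ := by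
  unfold ratErr rfun efun
  simp only [Polynomial.eval_mul, Polynomial.eval_C, mul_div_assoc]

lemma ratErr_nonneg (ω : ℝ) (p q : Polynomial ℂ) : 0 ≤ ratErr ω p q := by
  rw [ratErr_eq]
  exact Real.iSup_nonneg fun z => norm_nonneg _

lemma efun_abs (ω x : ℝ) : ‖efun ω x‖ = 1 := by
  unfold efun
  rw [show Complex.I * (ω:ℂ) * (x:ℂ) = ((ω*x : ℝ):ℂ) * Complex.I by push_cast; ring]
  exact Complex.norm_exp_ofReal_mul_I _

theorem not_unitary_aux (n : ℕ) (ω : ℝ) (hω : 0 < ω) (p q : Polynomial ℂ)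
    (hp : p.natDegree ≤ n) (hq : q.natDegree ≤ n)
    (hq0 : ∀ x : ℝ, x ∈ Set.Icc (-1:ℝ) 1 → q.eval (Complex.I * (x : ℂ)) ≠ 0)
    (hbest : ratErr ω p q = chebErr n ω)
    (hq0' : ∀ x : ℝ, q.eval (Complex.I * (x:ℂ)) ≠ 0)
    (hunit : ∀ x : ℝ, ‖p.eval (Complex.I * (x:ℂ)) / q.eval (Complex.I * (x:ℂ))‖ = 1)
    (hglobal : (∀ x : ℝ, x ∈ Set.Icc (-1:ℝ) 1 →
      p.eval (Complex.I*(x:ℂ)) = q.eval (Complex.I*(x:ℂ)) * Complex.exp (Complex.I*(ω:ℂ)*(x:ℂ))) → False) :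
    False := by
  have hunit' : ∀ x : ℝ, ‖rfun p q x‖ = 1 := hunit
  haveI hne : Nonempty (Set.Icc (-1:ℝ) 1) := ⟨⟨0, by norm_num⟩⟩
  have hbdd : BddAbove (Set.range (fun z : Set.Icc (-1:ℝ) 1 =>
      ‖rfun p q z - efun ω z‖)) := by
    refine ⟨2, ?_⟩
    rintro _ ⟨z, rfl⟩
    calc ‖rfun p q z - efun ω z‖
        ≤ ‖rfun p q z‖ + ‖efun ω z‖ := by
          exact norm_sub_le (rfun p q z) (efun ω z)
      _ = 2 := by rw [hunit', efun_abs]; norm_num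
  have hle : ∀ z : Set.Icc (-1:ℝ) 1,
      ‖rfun p q z - efun ω z‖ ≤ ratErr ω p q := by
    intro z; rw [ratErr_eq]; exact le_ciSup hbdd z
  rcases (ratErr_nonneg ω p q).eq_or_lt with h0 | hEpos
  · apply hglobal
    intro x hx
    have h1 : ‖rfun p q x - efun ω x‖ ≤ 0 := h0 ▸ hle ⟨x, hx⟩
    have h2 : rfun p q x = efun ω x := by
      have h3 := le_antisymm h1 (norm_nonneg _)
      exact sub_eq_zero.mp (norm_eq_zero.mp h3)
    unfold rfun at h2
    rw [div_eq_iff (hq0' x)] at h2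
    rw [h2]
    unfold efun
    ring
  · set E := ratErr ω p q with hEdef
    set l : ℝ := min (E^2/2) (1/2) with hldef
    have hl0 : 0 < l := lt_min (by positivity) (by norm_num)
    have hl1 : l ≤ 1/2 := min_le_right _ _
    have hlE : l < E^2 := lt_of_le_of_lt (min_le_left _ _) (by nlinarith)
    have key : ∀ z : Set.Icc (-1:ℝ) 1,
        ‖((1-l : ℝ):ℂ) * rfun p q z - efun ω z‖ ≤
          Real.sqrt ((1-l)*E^2 + l^2) := by
      intro z
      have hsq := abs_combo l (rfun p q z) (efun ω z) (hunit' z) (efun_abs ω z)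
      have hz : ‖rfun p q z - efun ω z‖ ≤ E := hle z
      have h4 : ‖((1-l : ℝ):ℂ) * rfun p q z - efun ω z‖^2 ≤ (1-l)*E^2 + l^2 := by
        rw [hsq]
        have h1l : (0:ℝ) ≤ 1 - l := by linarith
        have h7 : (1-l) * ‖rfun p q z - efun ω z‖^2 ≤ (1-l) * E^2 :=
          mul_le_mul_of_nonneg_left (pow_le_pow_left₀ (norm_nonneg _) hz 2) h1l
        linarith
      calc ‖((1-l : ℝ):ℂ) * rfun p q z - efun ω z‖
          = Real.sqrt (‖((1-l : ℝ):ℂ) * rfun p q z - efun ω z‖^2) :=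
            (Real.sqrt_sq (norm_nonneg _)).symm
        _ ≤ _ := Real.sqrt_le_sqrt h4
    have h2 : ratErr ω (Polynomial.C ((1-l : ℝ):ℂ) * p) q ≤ Real.sqrt ((1-l)*E^2 + l^2) := by
      rw [ratErr_C_mul]
      exact ciSup_le key
    have h3 : Real.sqrt ((1-l)*E^2 + l^2) < E := by
      have h5 : (1-l)*E^2 + l^2 < E^2 := by nlinarith
      calc Real.sqrt ((1-l)*E^2 + l^2) < Real.sqrt (E^2) :=
            Real.sqrt_lt_sqrt (by nlinarith) h5
        _ = E := Real.sqrt_sq hEpos.le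
    have hbddb : BddBelow { E : ℝ | ∃ p q : Polynomial ℂ, p.natDegree ≤ n ∧ q.natDegree ≤ n ∧
        (∀ x : ℝ, x ∈ Set.Icc (-1:ℝ) 1 → q.eval (Complex.I * (x : ℂ)) ≠ 0) ∧
        E = ratErr ω p q } := by
      refine ⟨0, ?_⟩
      rintro y ⟨p1, q1, _, _, _, rfl⟩
      exact ratErr_nonneg ω p1 q1
    have hmem : ratErr ω (Polynomial.C ((1-l : ℝ):ℂ) * p) q ∈
        { E : ℝ | ∃ p q : Polynomial ℂ, p.natDegree ≤ n ∧ q.natDegree ≤ n ∧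
          (∀ x : ℝ, x ∈ Set.Icc (-1:ℝ) 1 → q.eval (Complex.I * (x : ℂ)) ≠ 0) ∧
          E = ratErr ω p q } :=
      ⟨_, q, (Polynomial.natDegree_C_mul_le _ _).trans hp, hq, hq0, rfl⟩
    have h6 : chebErr n ω ≤ ratErr ω (Polynomial.C ((1-l : ℝ):ℂ) * p) q := csInf_le hbddb hmem
    rw [← hbest] at h6
    linarith

/-- for `ω > 0`, Chebyshev approximants are not unitary. -/
theorem cheb_approximant_not_unitary (n : ℕ) (ω : ℝ) (hω : 0 < ω) (p q : Polynomial ℂ)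
    (hp : p.natDegree ≤ n) (hq : q.natDegree ≤ n)
    (hq0 : ∀ x : ℝ, x ∈ Set.Icc (-1:ℝ) 1 → q.eval (Complex.I * (x : ℂ)) ≠ 0)
    (hbest : ratErr ω p q = chebErr n ω) :
    ∃ x : ℝ, q.eval (Complex.I * (x : ℂ)) = 0 ∨
      ‖p.eval (Complex.I * (x : ℂ)) / q.eval (Complex.I * (x : ℂ))‖ ≠ 1 := by
  by_contra hcon
  push_neg at hcon
  have hq0' : ∀ x : ℝ, q.eval (Complex.I * (x:ℂ)) ≠ 0 := fun x => (hcon x).1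
  have hunit : ∀ x : ℝ,
      ‖p.eval (Complex.I * (x:ℂ)) / q.eval (Complex.I * (x:ℂ))‖ = 1 :=
    fun x => (hcon x).2
  exact not_unitary_aux n ω hω p q hp hq hq0 hbest hq0' hunit
    (fun hglob => hq0' 0 (by rw [q_eq_zero ω hω p q (global_eq ω p q hglob)]; simp))
end

section
/- Let n ∈ ℕ, d ∈ ℕ with d ≤ n, let f : [-1,1] → ℂ be continuous, and let ζ(x) = p(x)/q(x) where p, q are complex polynomials of degree ≤ n − d and q(x) ≠ 0 for all x ∈ [-1,1]. Suppose there exist points −1 ≤ η₁ < x₁ < η₂ < x₂ < ⋯ < x_{2n−d+1} < η_{2n−d+2} ≤ 1 such that: (i) ζ(x_j) = f(x_j) for j = 1,…,2n−d+1; (ii) |ζ(x) − f(x)| ≤ |ζ(η₁) − f(η₁)| for all x ∈ [−1, x₁), |ζ(x) − f(x)| ≤ |ζ(η_j) − f(η_j)| for all x ∈ (x_{j−1}, x_j) and j = 2,…,2n−d+1, and |ζ(x) − f(x)| ≤ |ζ(η_{2n−d+2}) − f(η_{2n−d+2})| for all x ∈ (x_{2n−d+1}, 1]. Then for every pair of complex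 polynomials p̂, q̂ of degree ≤ n with q̂(x) ≠ 0 for all x ∈ [-1,1], one has (1/2)·min_{j=1,…,2n−d+2} |ζ(η_j) − f(η_j)| ≤ sup_{x∈[-1,1]} |p̂(x)/q̂(x) − f(x)|. -/
open Set


private lemma chain_lt' {z : ℕ → ℝ} {m : ℕ} (h : ∀ i, i < m → z i < z (i+1)) :
    ∀ i j, i < j → j ≤ m → z i < z j := by
  intro i j hij hjm
  induction j with
  | zero => omega
  | succ k ih =>
    rcases Nat.lt_succ_iff_lt_or_eq.mp hij with h' | h'
    · exact lt_trans (ih h' (by omega)) (h k (by omega))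
    · subst h'; exact h i (by omega)

private lemma sign_changes_le_natDegree' {R : Polynomial ℝ} {z : ℕ → ℝ} {m : ℕ}
    (hz : ∀ i, i < m → z i < z (i+1))
    (hs : ∀ i, i < m → R.eval (z i) * R.eval (z (i+1)) < 0) :
    m ≤ R.natDegree := by
  rcases Nat.eq_zero_or_pos m with rfl | hm
  · exact Nat.zero_le _
  have hR0 : R ≠ 0 := by
    intro h
    have := hs 0 hm
    rw [h] at this; simp at this
  have hroot : ∀ i, i < m → ∃ r, r ∈ Set.Ioo (z i) (z (i+1)) ∧ R.eval r = 0 := by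
    intro i hi
    have hcont : ContinuousOn (fun x => R.eval x) (Set.Icc (z i) (z (i+1))) :=
      (R.continuous).continuousOn
    have hlt := hz i hi
    rcases lt_or_ge (R.eval (z i)) 0 with hlt0 | hge0
    · have hpos : 0 < R.eval (z (i+1)) := by nlinarith [hs i hi]
      obtain ⟨r, hr, hr0⟩ := intermediate_value_Ioo hlt.le hcont ⟨hlt0, hpos⟩
      exact ⟨r, hr, hr0⟩
    · have hpos : 0 < R.eval (z i) := by
        rcases hge0.lt_or_eq with h' | h'
        · exact h'
        · exfalso; have := hs i hi; rw [← h'] at this; simp at this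
      have hneg : R.eval (z (i+1)) < 0 := by nlinarith [hs i hi]
      obtain ⟨r, hr, hr0⟩ := intermediate_value_Ioo' hlt.le hcont ⟨hneg, hpos⟩
      exact ⟨r, hr, hr0⟩
  choose! r hr hr0 using hroot
  have hrmono : ∀ i j, i < j → j < m → r i < r j := by
    intro i j hij hjm
    have h1 : r i < z (i+1) := (hr i (by omega)).2
    have h2 : z j < r j := (hr j hjm).1
    rcases Nat.lt_or_ge (i+1) j with h' | h'
    · exact lt_trans h1 (lt_trans (chain_lt' hz (i+1) j h' (by omega)) h2)
    · have : i + 1 = j := by omega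
      subst this; exact lt_trans h1 h2
  have hinj : Set.InjOn r (Finset.range m) := by
    intro a ha b hb hab
    simp only [Finset.coe_range, Set.mem_Iio] at ha hb
    by_contra hne
    rcases Nat.lt_or_ge a b with h' | h'
    · exact absurd hab (ne_of_lt (hrmono a b h' hb))
    · have : b < a := by omega
      exact absurd hab.symm (ne_of_lt (hrmono b a this ha))
  have hsub : (Finset.range m).image r ⊆ R.roots.toFinset := by
    intro x hx
    simp only [Finset.mem_image, Finset.mem_range] at hx
    obtain ⟨i, hi, rfl⟩ := hx
    rw [Multiset.mem_toFinset, Polynomial.mem_roots hR0]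
    exact hr0 i hi
  calc m = (Finset.range m).card := (Finset.card_range m).symm
    _ = ((Finset.range m).image r).card := (Finset.card_image_of_injOn hinj).symm
    _ ≤ R.roots.toFinset.card := Finset.card_le_card hsub
    _ ≤ Multiset.card R.roots := Multiset.toFinset_card_le _
    _ ≤ R.natDegree := R.card_roots'

private lemma realify' {G : Polynomial ℂ} (h : G.map (starRingEnd ℂ) = G) :
    ∃ R : Polynomial ℝ, R.map (algebraMap ℝ ℂ) = G ∧ R.degree = G.degree := by
  apply Polynomial.mem_lifts_and_degree_eq
  rw [Polynomial.lifts_iff_coeff_lifts]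
  intro k
  have hc : (starRingEnd ℂ) (G.coeff k) = G.coeff k := by
    conv_rhs => rw [← h]
    rw [Polynomial.coeff_map]
  rw [Complex.conj_eq_iff_re] at hc
  exact ⟨(G.coeff k).re, by simpa using hc⟩

private lemma eval_map_conj' (x : ℝ) (A : Polynomial ℂ) :
    (A.map (starRingEnd ℂ)).eval (x:ℂ) = (starRingEnd ℂ) (A.eval (x:ℂ)) := by
  calc (A.map (starRingEnd ℂ)).eval (x:ℂ)
      = Polynomial.eval₂ (starRingEnd ℂ) ((starRingEnd ℂ) (x:ℂ)) A := by
        rw [Polynomial.eval_map, Complex.conj_ofReal]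
    _ = (starRingEnd ℂ) (A.eval (x:ℂ)) := Polynomial.eval₂_at_apply _ _

set_option maxHeartbeats 1000000 in
/-- a de-la-Vallée-Poussin-type lower bound.  If a rational function
`ζ = p/q` of degree `(n-d, n-d)` interpolates a continuous function `f` at
`2n-d+1` nodes `x_1 < … < x_{2n-d+1}`, interleaved with points
`η_1 < … < η_{2n-d+2}` of locally maximal error, then half the minimal error
`|ζ(η_j) - f(η_j)|` is a lower bound for the uniform error of any rational
approximant of degree `(n, n)` to `f` on `[-1,1]`. -/
theorem vallee_poussin_type_lower_bound (n d : ℕ) (hd : d ≤ n)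
    (f : ℝ → ℂ) (hf : ContinuousOn f (Set.Icc (-1:ℝ) 1))
    (p q : Polynomial ℂ) (hp : p.natDegree ≤ n - d) (hq : q.natDegree ≤ n - d)
    (hq0 : ∀ x : ℝ, x ∈ Set.Icc (-1:ℝ) 1 → q.eval (x : ℂ) ≠ 0)
    -- the error function of `ζ = p/q`
    (E : ℝ → ℝ)
    (hE : ∀ x : ℝ, E x = ‖p.eval (x : ℂ) / q.eval (x : ℂ) - f x‖)
    -- points `η 1 < x 1 < η 2 < … < x (2n-d+1) < η (2n-d+2)` in `[-1,1]`
    (η xs : ℕ → ℝ)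
    (hη1 : -1 ≤ η 1) (hηlast : η (2 * n - d + 2) ≤ 1)
    (horder : ∀ j : ℕ, 1 ≤ j → j ≤ 2 * n - d + 1 → η j < xs j ∧ xs j < η (j + 1))
    -- (i) interpolation
    (hinterp : ∀ j : ℕ, 1 ≤ j → j ≤ 2 * n - d + 1 →
      p.eval ((xs j : ℝ) : ℂ) / q.eval ((xs j : ℝ) : ℂ) = f (xs j))
    -- (ii) the error is locally maximal at the points `η j`
    (hmax_left : ∀ x : ℝ, -1 ≤ x → x < xs 1 → E x ≤ E (η 1))
    (hmax_mid : ∀ j : ℕ, 2 ≤ j → j ≤ 2 * n - d + 1 →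
      ∀ x : ℝ, xs (j - 1) < x → x < xs j → E x ≤ E (η j))
    (hmax_right : ∀ x : ℝ, xs (2 * n - d + 1) < x → x ≤ 1 → E x ≤ E (η (2 * n - d + 2))) :
    ∀ ph qh : Polynomial ℂ, ph.natDegree ≤ n → qh.natDegree ≤ n →
      (∀ x : ℝ, x ∈ Set.Icc (-1:ℝ) 1 → qh.eval (x : ℂ) ≠ 0) →
      (1 / 2) * (⨅ j : Fin (2 * n - d + 2), E (η (j.val + 1))) ≤
        ⨆ x : Set.Icc (-1:ℝ) 1,
          ‖ph.eval ((x : ℝ) : ℂ) / qh.eval ((x : ℝ) : ℂ) - f (x : ℝ)‖ := by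
  intro ph qh hph hqh hqh0
  by_contra hcon
  push_neg at hcon
  -- abbreviations
  obtain ⟨μ, hμdef⟩ : ∃ μ : ℝ, μ = ⨅ j : Fin (2 * n - d + 2), E (η (j.val + 1)) := ⟨_, rfl⟩
  obtain ⟨M, hMdef⟩ : ∃ M : ℝ, M = ⨆ x : Set.Icc (-1:ℝ) 1,
      ‖ph.eval ((x : ℝ) : ℂ) / qh.eval ((x : ℝ) : ℂ) - f (x : ℝ)‖ := ⟨_, rfl⟩
  obtain ⟨err, herrdef⟩ : ∃ err : ℝ → ℝ,
      err = fun x : ℝ => ‖ph.eval (x : ℂ) / qh.eval (x : ℂ) - f x‖ := ⟨_, rfl⟩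
  rw [← hμdef, ← hMdef] at hcon
  -- continuity and boundedness of the error of `ph/qh`
  have herrcont : ContinuousOn err (Set.Icc (-1:ℝ) 1) := by
    rw [herrdef]
    apply Continuous.comp_continuousOn continuous_norm
    apply ContinuousOn.sub _ hf
    apply ContinuousOn.div
    · exact ((ph.continuous).comp Complex.continuous_ofReal).continuousOn
    · exact ((qh.continuous).comp Complex.continuous_ofReal).continuousOn
    · exact hqh0
  have hMle : ∀ t : ℝ, t ∈ Set.Icc (-1:ℝ) 1 → err t ≤ M := by
    have hbdd : BddAbove (Set.range fun x : Set.Icc (-1:ℝ) 1 => err (x : ℝ)) := by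
      have heq : (Set.range fun x : Set.Icc (-1:ℝ) 1 => err (x : ℝ))
          = err '' Set.Icc (-1:ℝ) 1 := by
        rw [show (fun x : Set.Icc (-1:ℝ) 1 => err (x : ℝ)) = err ∘ Subtype.val from rfl,
          Set.range_comp, Subtype.range_coe]
      rw [heq]
      exact (isCompact_Icc.image_of_continuousOn herrcont).bddAbove
    intro t ht
    have h5 : err t ≤ ⨆ x : Set.Icc (-1:ℝ) 1, err (x : ℝ) :=
      le_ciSup hbdd (⟨t, ht⟩ : Set.Icc (-1:ℝ) 1)
    rw [hMdef]
    simpa only [herrdef] using h5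
  have herr0 : ∀ t : ℝ, 0 ≤ err t := by
    intro t; rw [herrdef]; exact norm_nonneg _
  have hμle : ∀ j : ℕ, 1 ≤ j → j ≤ 2 * n - d + 2 → μ ≤ E (η j) := by
    intro j hj1 hj2
    rw [hμdef]
    have := ciInf_le (f := fun j : Fin (2 * n - d + 2) => E (η (j.val + 1)))
      (Set.Finite.bddBelow (Set.finite_range _)) (⟨j - 1, by omega⟩ : Fin (2 * n - d + 2))
    simpa [show j - 1 + 1 = j by omega] using this
  have hμ0 : 0 ≤ μ := by
    rw [hμdef]
    exact Real.iInf_nonneg fun j => by rw [hE]; exact norm_nonneg _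
  have hM0 : 0 ≤ M := by
    have h1 : (-1:ℝ) ∈ Set.Icc (-1:ℝ) 1 := by constructor <;> norm_num
    exact le_trans (herr0 (-1)) (hMle (-1) h1)
  have hMμ : M < μ / 2 := by linarith [hcon]
  -- the chain of points
  obtain ⟨z, hzdef⟩ : ∃ z : ℕ → ℝ,
      z = fun i => if i % 2 = 0 then η (i / 2 + 1) else xs (i / 2 + 1) := ⟨_, rfl⟩
  have hzeven : ∀ i : ℕ, i % 2 = 0 → z i = η (i / 2 + 1) := by
    intro i h; rw [hzdef]; exact if_pos h
  have hzodd : ∀ i : ℕ, i % 2 = 1 → z i = xs (i / 2 + 1) := by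
    intro i h; rw [hzdef]; exact if_neg (by omega)
  have hzlt : ∀ i, i < 2 * (2 * n - d + 1) → z i < z (i + 1) := by
    intro i hi
    rcases Nat.mod_two_eq_zero_or_one i with h2 | h2
    · rw [hzeven i h2, hzodd (i+1) (by omega), show (i + 1) / 2 = i / 2 by omega]
      exact (horder (i / 2 + 1) (by omega) (by omega)).1
    · rw [hzodd i h2, hzeven (i+1) (by omega),
        show (i + 1) / 2 + 1 = (i / 2 + 1) + 1 by omega]
      exact (horder (i / 2 + 1) (by omega) (by omega)).2
  have hz0 : z 0 = η 1 := hzeven 0 rfl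
  have hztop : z (2 * (2 * n - d + 1)) = η (2 * n - d + 2) := by
    rw [hzeven _ (by omega)]
    congr 1
    omega
  have hz_mem : ∀ i, i ≤ 2 * (2 * n - d + 1) → z i ∈ Set.Icc (-1:ℝ) 1 := by
    intro i hi
    constructor
    · rcases Nat.eq_zero_or_pos i with rfl | hi0
      · rw [hz0]; exact hη1
      · exact le_trans hη1 (le_of_lt (hz0 ▸ chain_lt' hzlt 0 i hi0 hi))
    · rcases eq_or_lt_of_le hi with h' | h'
      · rw [h', hztop]; exact hηlast
      · exact le_trans (le_of_lt (chain_lt' hzlt i _ h' le_rfl)) (hztop ▸ hηlast)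
  have hη_mem : ∀ j, 1 ≤ j → j ≤ 2 * n - d + 2 → η j ∈ Set.Icc (-1:ℝ) 1 := by
    intro j hj1 hj2
    have he : η j = z (2 * (j - 1)) := by
      rw [hzeven _ (by omega)]
      congr 1
      omega
    rw [he]
    exact hz_mem _ (by omega)
  have hxs_mem : ∀ j, 1 ≤ j → j ≤ 2 * n - d + 1 → xs j ∈ Set.Icc (-1:ℝ) 1 := by
    intro j hj1 hj2
    have he : xs j = z (2 * j - 1) := by
      rw [hzodd _ (by omega)]
      congr 1
      omega
    rw [he]
    exact hz_mem _ (by omega)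
  -- the auxiliary polynomials
  obtain ⟨A, hAdef⟩ : ∃ A : Polynomial ℂ, A = p * qh - ph * q := ⟨_, rfl⟩
  obtain ⟨B, hBdef⟩ : ∃ B : Polynomial ℂ, B = q * qh := ⟨_, rfl⟩
  obtain ⟨c, hcdef⟩ : ∃ c : ℝ, c = (μ / 2) ^ 2 := ⟨_, rfl⟩
  obtain ⟨G, hGdef⟩ : ∃ G : Polynomial ℂ,
      G = A * A.map (starRingEnd ℂ)
        - Polynomial.C ((c : ℝ) : ℂ) * (B * B.map (starRingEnd ℂ)) := ⟨_, rfl⟩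
  have hσσ : (starRingEnd ℂ).comp (starRingEnd ℂ) = RingHom.id ℂ :=
    RingHom.ext fun w => Complex.conj_conj w
  have hGconj : G.map (starRingEnd ℂ) = G := by
    rw [hGdef, Polynomial.map_sub, Polynomial.map_mul, Polynomial.map_mul,
      Polynomial.map_mul, Polynomial.map_map, Polynomial.map_map, hσσ, Polynomial.map_C]
    simp only [Polynomial.map_id]
    rw [show (starRingEnd ℂ) ((c : ℝ) : ℂ) = ((c : ℝ) : ℂ) from Complex.conj_ofReal c]
    ring
  obtain ⟨R, hRmap, hRdeg⟩ := realify' hGconj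
  -- evaluation of R
  have hReval : ∀ x : ℝ, R.eval x
      = Complex.normSq (A.eval (x : ℂ)) - c * Complex.normSq (B.eval (x : ℂ)) := by
    intro x
    have h1 : ((R.eval x : ℝ) : ℂ) = G.eval ((x : ℝ) : ℂ) := by
      conv_rhs => rw [← hRmap]
      rw [Polynomial.eval_map, show ((x : ℝ) : ℂ) = algebraMap ℝ ℂ x from rfl,
        Polynomial.eval₂_at_apply, Complex.coe_algebraMap]
    have h2 : G.eval ((x : ℝ) : ℂ)
        = ((Complex.normSq (A.eval (x : ℂ)) - c * Complex.normSq (B.eval (x : ℂ)) : ℝ) : ℂ) := by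
      rw [hGdef]
      simp only [Polynomial.eval_sub, Polynomial.eval_mul, Polynomial.eval_C]
      rw [eval_map_conj' x A, eval_map_conj' x B, Complex.mul_conj, Complex.mul_conj]
      push_cast
      ring
    rw [h2] at h1
    exact_mod_cast h1
  -- degree bound
  have hAdeg : A.natDegree ≤ 2 * n - d := by
    rw [hAdef]
    apply le_trans (Polynomial.natDegree_sub_le _ _)
    apply max_le
    · exact le_trans (Polynomial.natDegree_mul_le) (by omega)
    · exact le_trans (Polynomial.natDegree_mul_le) (by omega)
  have hBdeg : B.natDegree ≤ 2 * n - d := by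
    rw [hBdef]
    exact le_trans (Polynomial.natDegree_mul_le) (by omega)
  have hGdeg : G.natDegree ≤ 2 * (2 * n - d) := by
    have hA2 : (A * A.map (starRingEnd ℂ)).natDegree ≤ 2 * (2 * n - d) :=
      le_trans (Polynomial.natDegree_mul_le)
        (by have := Polynomial.natDegree_map_le (f := starRingEnd ℂ) (p := A); omega)
    have hB2 : (B * B.map (starRingEnd ℂ)).natDegree ≤ 2 * (2 * n - d) :=
      le_trans (Polynomial.natDegree_mul_le)
        (by have := Polynomial.natDegree_map_le (f := starRingEnd ℂ) (p := B); omega)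
    have hCB : (Polynomial.C ((c : ℝ) : ℂ) * (B * B.map (starRingEnd ℂ))).natDegree
        ≤ 2 * (2 * n - d) := by
      refine le_trans (Polynomial.natDegree_mul_le) ?_
      rw [Polynomial.natDegree_C]
      omega
    rw [hGdef]
    exact le_trans (Polynomial.natDegree_sub_le _ _) (max_le hA2 hCB)
  have hRnatdeg : R.natDegree ≤ 2 * (2 * n - d) :=
    le_trans (le_of_eq (Polynomial.natDegree_eq_of_degree_eq hRdeg)) hGdeg
  -- B does not vanish on [-1,1]
  have hB0 : ∀ x : ℝ, x ∈ Set.Icc (-1:ℝ) 1 → B.eval (x : ℂ) ≠ 0 := by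
    intro x hx
    rw [hBdef, Polynomial.eval_mul]
    exact mul_ne_zero (hq0 x hx) (hqh0 x hx)
  -- A as difference of rationals times B
  have hAB : ∀ x : ℝ, x ∈ Set.Icc (-1:ℝ) 1 →
      A.eval (x : ℂ) = (p.eval (x : ℂ) / q.eval (x : ℂ) - ph.eval (x : ℂ) / qh.eval (x : ℂ))
        * B.eval (x : ℂ) := by
    intro x hx
    rw [hAdef, hBdef]
    have h1 := hq0 x hx
    have h2 := hqh0 x hx
    simp only [Polynomial.eval_sub, Polynomial.eval_mul]
    field_simp
  -- positivity at the η points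
  have hpos : ∀ j, 1 ≤ j → j ≤ 2 * n - d + 2 → 0 < R.eval (η j) := by
    intro j hj1 hj2
    have hx : η j ∈ Set.Icc (-1:ℝ) 1 := hη_mem j hj1 hj2
    have hBx := hB0 (η j) hx
    have hζr : μ - M ≤ ‖
        (p.eval ((η j : ℝ) : ℂ) / q.eval ((η j : ℝ) : ℂ)
          - ph.eval ((η j : ℝ) : ℂ) / qh.eval ((η j : ℝ) : ℂ))‖ := by
      have h1 : μ ≤ E (η j) := hμle j hj1 hj2
      have h2 : err (η j) ≤ M := hMle (η j) hx
      have h3 : E (η j) - err (η j) ≤ ‖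
          (p.eval ((η j : ℝ) : ℂ) / q.eval ((η j : ℝ) : ℂ)
            - ph.eval ((η j : ℝ) : ℂ) / qh.eval ((η j : ℝ) : ℂ))‖ := by
        rw [hE, herrdef]
        have h4 := norm_sub_norm_le
          (p.eval ((η j : ℝ) : ℂ) / q.eval ((η j : ℝ) : ℂ) - f (η j))
          (ph.eval ((η j : ℝ) : ℂ) / qh.eval ((η j : ℝ) : ℂ) - f (η j))
        calc ‖p.eval ((η j : ℝ) : ℂ) / q.eval ((η j : ℝ) : ℂ) - f (η j)‖
              - ‖ph.eval ((η j : ℝ) : ℂ) / qh.eval ((η j : ℝ) : ℂ) - f (η j)‖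
            ≤ ‖(p.eval ((η j : ℝ) : ℂ) / q.eval ((η j : ℝ) : ℂ) - f (η j))
              - (ph.eval ((η j : ℝ) : ℂ) / qh.eval ((η j : ℝ) : ℂ) - f (η j))‖ := h4
          _ = _ := by congr 1; ring
      linarith
    obtain ⟨t, htdef⟩ : ∃ t : ℝ, t = ‖
        (p.eval ((η j : ℝ) : ℂ) / q.eval ((η j : ℝ) : ℂ)
          - ph.eval ((η j : ℝ) : ℂ) / qh.eval ((η j : ℝ) : ℂ))‖ := ⟨_, rfl⟩
    obtain ⟨s, hsdef⟩ : ∃ s : ℝ, s = Complex.normSq (B.eval ((η j : ℝ) : ℂ)) := ⟨_, rfl⟩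
    rw [hReval, hAB (η j) hx, map_mul, ← Complex.sq_norm
      (p.eval ((η j : ℝ) : ℂ) / q.eval ((η j : ℝ) : ℂ)
        - ph.eval ((η j : ℝ) : ℂ) / qh.eval ((η j : ℝ) : ℂ)), ← htdef, ← hsdef, hcdef]
    have hBpos : 0 < s := hsdef ▸ Complex.normSq_pos.mpr hBx
    rw [← htdef] at hζr
    have hgt : μ / 2 < t := by linarith
    have h0 : (0:ℝ) ≤ μ / 2 := by linarith
    have hsq : (μ / 2) ^ 2 < t ^ 2 := by nlinarith
    nlinarith [mul_pos (sub_pos.mpr hsq) hBpos]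
  -- negativity at the xs points
  have hneg : ∀ j, 1 ≤ j → j ≤ 2 * n - d + 1 → R.eval (xs j) < 0 := by
    intro j hj1 hj2
    have hx : xs j ∈ Set.Icc (-1:ℝ) 1 := hxs_mem j hj1 hj2
    have hBx := hB0 (xs j) hx
    have hζr : ‖
        (p.eval ((xs j : ℝ) : ℂ) / q.eval ((xs j : ℝ) : ℂ)
          - ph.eval ((xs j : ℝ) : ℂ) / qh.eval ((xs j : ℝ) : ℂ))‖ ≤ M := by
      have h1 : p.eval ((xs j : ℝ) : ℂ) / q.eval ((xs j : ℝ) : ℂ) = f (xs j) :=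
        hinterp j hj1 hj2
      have h2 : err (xs j) ≤ M := hMle (xs j) hx
      rw [h1]
      rw [herrdef] at h2
      calc ‖f (xs j) - ph.eval ((xs j : ℝ) : ℂ) / qh.eval ((xs j : ℝ) : ℂ)‖
          = ‖ph.eval ((xs j : ℝ) : ℂ) / qh.eval ((xs j : ℝ) : ℂ) - f (xs j)‖ := by
            rw [← norm_neg]; congr 1; ring
        _ ≤ M := h2
    obtain ⟨t, htdef⟩ : ∃ t : ℝ, t = ‖
        (p.eval ((xs j : ℝ) : ℂ) / q.eval ((xs j : ℝ) : ℂ)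
          - ph.eval ((xs j : ℝ) : ℂ) / qh.eval ((xs j : ℝ) : ℂ))‖ := ⟨_, rfl⟩
    obtain ⟨s, hsdef⟩ : ∃ s : ℝ, s = Complex.normSq (B.eval ((xs j : ℝ) : ℂ)) := ⟨_, rfl⟩
    rw [hReval, hAB (xs j) hx, map_mul, ← Complex.sq_norm
      (p.eval ((xs j : ℝ) : ℂ) / q.eval ((xs j : ℝ) : ℂ)
        - ph.eval ((xs j : ℝ) : ℂ) / qh.eval ((xs j : ℝ) : ℂ)), ← htdef, ← hsdef, hcdef]
    have hBpos : 0 < s := hsdef ▸ Complex.normSq_pos.mpr hBx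
    rw [← htdef] at hζr
    have habs0 : (0:ℝ) ≤ t := htdef ▸ norm_nonneg _
    have hsq : t ^ 2 < (μ / 2) ^ 2 := by nlinarith
    nlinarith [mul_pos (sub_pos.mpr hsq) hBpos]
  -- sign changes
  have hs : ∀ i, i < 2 * (2 * n - d + 1) → R.eval (z i) * R.eval (z (i + 1)) < 0 := by
    intro i hi
    rcases Nat.mod_two_eq_zero_or_one i with h2 | h2
    · rw [hzeven i h2, hzodd (i+1) (by omega), show (i + 1) / 2 = i / 2 by omega]
      exact mul_neg_of_pos_of_neg (hpos _ (by omega) (by omega)) (hneg _ (by omega) (by omega))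
    · rw [hzodd i h2, hzeven (i+1) (by omega),
        show (i + 1) / 2 + 1 = (i / 2 + 1) + 1 by omega]
      exact mul_neg_of_neg_of_pos (hneg _ (by omega) (by omega)) (hpos _ (by omega) (by omega))
  have hfinal : 2 * (2 * n - d + 1) ≤ R.natDegree := sign_changes_le_natDegree' hzlt hs
  omega
end

section
/- For ω ∈ (0, π/2], the degree-zero Chebyshev error satisfies E^c(0,ω) = sin ω, and the constant function r ≡ cos ω attains this error: sup_{x∈[-1,1]} |cos ω − exp(iωx)| = sin ω. -/
open Set

lemma exp_Iωx (ω x : ℝ) :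
    Complex.exp (Complex.I * (ω:ℂ) * (x:ℂ)) =
      ((Real.cos (ω*x) : ℝ) : ℂ) + ((Real.sin (ω*x) : ℝ) : ℂ) * Complex.I := by
  have h : Complex.I * (ω:ℂ) * (x:ℂ) = ((ω*x : ℝ) : ℂ) * Complex.I := by
    push_cast; ring
  rw [h, Complex.exp_mul_I]
  push_cast
  simp [Complex.cos_ofReal_re, Complex.sin_ofReal_re]

lemma abs_exp_Iωx (ω x : ℝ) : ‖Complex.exp (Complex.I * (ω:ℂ) * (x:ℂ))‖ = 1 := by
  have h : Complex.I * (ω:ℂ) * (x:ℂ) = ((ω*x : ℝ) : ℂ) * Complex.I := by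
    push_cast; ring
  rw [h, Complex.norm_exp_ofReal_mul_I]

lemma absSq (ω x : ℝ) :
    (‖((Real.cos ω : ℝ):ℂ) - Complex.exp (Complex.I * (ω:ℂ) * (x:ℂ))‖)^2
      = (Real.cos ω - Real.cos (ω*x))^2 + (Real.sin (ω*x))^2 := by
  rw [exp_Iωx, Complex.sq_norm, Complex.normSq_apply]
  simp only [Complex.sub_re, Complex.sub_im, Complex.add_re, Complex.add_im, Complex.mul_re,
    Complex.mul_im, Complex.ofReal_re, Complex.ofReal_im, Complex.I_re, Complex.I_im]
  ring

lemma key_le (ω : ℝ) (hω0 : 0 < ω) (hω1 : ω ≤ Real.pi / 2) (x : ℝ) (hx : x ∈ Set.Icc (-1:ℝ) 1) :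
    ‖((Real.cos ω : ℝ):ℂ) - Complex.exp (Complex.I * (ω:ℂ) * (x:ℂ))‖ ≤ Real.sin ω := by
  have hsin : 0 ≤ Real.sin ω := Real.sin_nonneg_of_nonneg_of_le_pi hω0.le
    (hω1.trans (by linarith [Real.pi_pos]))
  have hcos : 0 ≤ Real.cos ω := Real.cos_nonneg_of_mem_Icc ⟨by linarith [Real.pi_pos], hω1⟩
  have hcc : Real.cos ω ≤ Real.cos (ω*x) := by
    have h1 : |ω*x| ≤ ω := by
      rw [abs_mul, abs_of_pos hω0]
      calc ω * |x| ≤ ω * 1 :=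
            mul_le_mul_of_nonneg_left (abs_le.mpr ⟨hx.1, hx.2⟩) hω0.le
        _ = ω := mul_one ω
    calc Real.cos ω ≤ Real.cos |ω*x| :=
          Real.cos_le_cos_of_nonneg_of_le_pi (abs_nonneg _)
            (hω1.trans (by linarith [Real.pi_pos])) h1
      _ = Real.cos (ω*x) := by rw [Real.cos_abs]
  have hsq : (‖((Real.cos ω : ℝ):ℂ) - Complex.exp (Complex.I * (ω:ℂ) * (x:ℂ))‖)^2
      ≤ (Real.sin ω)^2 := by
    rw [absSq]
    have hpy : (Real.sin (ω*x))^2 = 1 - (Real.cos (ω*x))^2 := by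
      have := Real.sin_sq_add_cos_sq (ω*x); linarith
    have hpy2 : (Real.sin ω)^2 = 1 - (Real.cos ω)^2 := by
      have := Real.sin_sq_add_cos_sq ω; linarith
    rw [hpy, hpy2]
    nlinarith [sq_nonneg (Real.cos ω - Real.cos (ω*x)), mul_le_mul_of_nonneg_left hcc hcos]
  exact (pow_le_pow_iff_left₀ (norm_nonneg _) hsin (by norm_num)).mp hsq

lemma key_eq (ω : ℝ) (hω0 : 0 < ω) (hω1 : ω ≤ Real.pi / 2) :
    ‖((Real.cos ω : ℝ):ℂ) - Complex.exp (Complex.I * (ω:ℂ) * ((1:ℝ):ℂ))‖ = Real.sin ω := by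
  have hsin : 0 ≤ Real.sin ω := Real.sin_nonneg_of_nonneg_of_le_pi hω0.le
    (hω1.trans (by linarith [Real.pi_pos]))
  have h := absSq ω 1
  rw [mul_one, sub_self] at h
  have := Real.sqrt_sq (norm_nonneg
    (((Real.cos ω : ℝ):ℂ) - Complex.exp (Complex.I * (ω:ℂ) * ((1:ℝ):ℂ))))
  rw [← this, h]
  simpa using Real.sqrt_sq hsin

lemma exp_diff (ω : ℝ) :
    Complex.exp (Complex.I * (ω:ℂ) * ((1:ℝ):ℂ)) - Complex.exp (Complex.I * (ω:ℂ) * ((-1:ℝ):ℂ))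
      = ((2 * Real.sin ω : ℝ):ℂ) * Complex.I := by
  rw [exp_Iωx, exp_Iωx]
  rw [show ω * (-1:ℝ) = -ω by ring, mul_one, Real.cos_neg, Real.sin_neg]
  push_cast
  ring

lemma lower (ω : ℝ) (hω0 : 0 < ω) (hω1 : ω ≤ Real.pi / 2) (c : ℂ) :
    Real.sin ω ≤ ‖c - Complex.exp (Complex.I * (ω:ℂ) * ((1:ℝ):ℂ))‖ ∨
    Real.sin ω ≤ ‖c - Complex.exp (Complex.I * (ω:ℂ) * ((-1:ℝ):ℂ))‖ := by
  set e1 := Complex.exp (Complex.I * (ω:ℂ) * ((1:ℝ):ℂ))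
  set e2 := Complex.exp (Complex.I * (ω:ℂ) * ((-1:ℝ):ℂ))
  have hsin : 0 ≤ Real.sin ω := Real.sin_nonneg_of_nonneg_of_le_pi hω0.le
    (hω1.trans (by linarith [Real.pi_pos]))
  have h2 : ‖e1 - e2‖ = 2 * Real.sin ω := by
    rw [exp_diff ω, norm_mul, Complex.norm_real, Complex.norm_I, mul_one, Real.norm_eq_abs,
      abs_of_nonneg (by linarith)]
  have htr : ‖e1 - e2‖ ≤ ‖c - e2‖ + ‖c - e1‖ := by
    have : e1 - e2 = (c - e2) - (c - e1) := by ring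
    rw [this]
    simpa using norm_sub_le (c - e2) (c - e1)
  by_contra hcon
  push_neg at hcon
  rw [h2] at htr
  linarith [hcon.1, hcon.2]


/-- for `ω ∈ (0, π/2]`, the degree-zero Chebyshev error is `sin ω`,
attained by the constant function `r ≡ cos ω`. -/
theorem chebErr_degree_zero_small_freq (ω : ℝ) (hω0 : 0 < ω) (hω1 : ω ≤ Real.pi / 2) :
    chebErr 0 ω = Real.sin ω ∧
      ratErr ω (Polynomial.C ((Real.cos ω : ℝ) : ℂ)) 1 = Real.sin ω := by
  have hsin : 0 ≤ Real.sin ω := Real.sin_nonneg_of_nonneg_of_le_pi hω0.le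
    (hω1.trans (by linarith [Real.pi_pos]))
  haveI : Nonempty (Set.Icc (-1:ℝ) 1) := ⟨⟨0, by norm_num⟩⟩
  have h1mem : (1:ℝ) ∈ Set.Icc (-1:ℝ) 1 := by norm_num
  have hm1mem : (-1:ℝ) ∈ Set.Icc (-1:ℝ) 1 := by norm_num
  have part2 : ratErr ω (Polynomial.C ((Real.cos ω : ℝ) : ℂ)) 1 = Real.sin ω := by
    unfold ratErr
    have hcong : (⨆ x : Set.Icc (-1:ℝ) 1,
        ‖(Polynomial.C ((Real.cos ω : ℝ):ℂ)).eval (Complex.I * ((x:ℝ):ℂ)) /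
          (1:Polynomial ℂ).eval (Complex.I * ((x:ℝ):ℂ)) -
          Complex.exp (Complex.I * (ω:ℂ) * ((x:ℝ):ℂ))‖)
        = ⨆ x : Set.Icc (-1:ℝ) 1,
          ‖((Real.cos ω : ℝ):ℂ) - Complex.exp (Complex.I * (ω:ℂ) * ((x:ℝ):ℂ))‖ :=
      iSup_congr fun x => by simp
    rw [hcong]
    have hbdd : BddAbove (Set.range fun x : Set.Icc (-1:ℝ) 1 =>
        ‖((Real.cos ω : ℝ):ℂ) - Complex.exp (Complex.I * (ω:ℂ) * ((x:ℝ):ℂ))‖) := by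
      refine ⟨Real.sin ω, ?_⟩
      rintro _ ⟨x, rfl⟩
      exact key_le ω hω0 hω1 x x.2
    apply le_antisymm
    · exact ciSup_le fun x => key_le ω hω0 hω1 x x.2
    · have h := le_ciSup hbdd (⟨1, h1mem⟩ : Set.Icc (-1:ℝ) 1)
      calc Real.sin ω
          = ‖((Real.cos ω : ℝ):ℂ) -
              Complex.exp (Complex.I * (ω:ℂ) * ((1:ℝ):ℂ))‖ := (key_eq ω hω0 hω1).symm
        _ ≤ _ := h
  refine ⟨?_, part2⟩
  unfold chebErr
  have hmem : Real.sin ω ∈ { E : ℝ | ∃ p q : Polynomial ℂ, p.natDegree ≤ 0 ∧ q.natDegree ≤ 0 ∧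
      (∀ x : ℝ, x ∈ Set.Icc (-1:ℝ) 1 → q.eval (Complex.I * (x : ℂ)) ≠ 0) ∧
      E = ratErr ω p q } := by
    refine ⟨Polynomial.C ((Real.cos ω : ℝ):ℂ), 1, ?_, ?_, ?_, part2.symm⟩
    · simp
    · simp
    · intro x _; simp
  have hlb : ∀ E ∈ { E : ℝ | ∃ p q : Polynomial ℂ, p.natDegree ≤ 0 ∧ q.natDegree ≤ 0 ∧
      (∀ x : ℝ, x ∈ Set.Icc (-1:ℝ) 1 → q.eval (Complex.I * (x : ℂ)) ≠ 0) ∧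
      E = ratErr ω p q }, Real.sin ω ≤ E := by
    rintro E ⟨p, q, hp, hq, hqne, rfl⟩
    have pe : p = Polynomial.C (p.coeff 0) := Polynomial.eq_C_of_natDegree_le_zero hp
    have qe : q = Polynomial.C (q.coeff 0) := Polynomial.eq_C_of_natDegree_le_zero hq
    set c : ℂ := p.coeff 0 / q.coeff 0 with hc
    unfold ratErr
    have hcong : (⨆ x : Set.Icc (-1:ℝ) 1,
        ‖p.eval (Complex.I * ((x:ℝ):ℂ)) / q.eval (Complex.I * ((x:ℝ):ℂ)) -
          Complex.exp (Complex.I * (ω:ℂ) * ((x:ℝ):ℂ))‖)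
        = ⨆ x : Set.Icc (-1:ℝ) 1,
          ‖c - Complex.exp (Complex.I * (ω:ℂ) * ((x:ℝ):ℂ))‖ :=
      iSup_congr fun x => by rw [pe, qe]; simp [hc]
    rw [hcong]
    have hbdd : BddAbove (Set.range fun x : Set.Icc (-1:ℝ) 1 =>
        ‖c - Complex.exp (Complex.I * (ω:ℂ) * ((x:ℝ):ℂ))‖) := by
      refine ⟨‖c‖ + 1, ?_⟩
      rintro _ ⟨x, rfl⟩
      calc ‖c - Complex.exp (Complex.I * (ω:ℂ) * ((x:ℝ):ℂ))‖
          ≤ ‖c‖ + ‖Complex.exp (Complex.I * (ω:ℂ) * ((x:ℝ):ℂ))‖ := by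
            simpa using
              norm_sub_le c (Complex.exp (Complex.I * (ω:ℂ) * ((x:ℝ):ℂ)))
        _ = ‖c‖ + 1 := by rw [abs_exp_Iωx]
    rcases lower ω hω0 hω1 c with h | h
    · exact h.trans (le_ciSup hbdd (⟨1, h1mem⟩ : Set.Icc (-1:ℝ) 1))
    · exact h.trans (le_ciSup hbdd (⟨-1, hm1mem⟩ : Set.Icc (-1:ℝ) 1))
  exact le_antisymm (csInf_le ⟨Real.sin ω, hlb⟩ hmem) (le_csInf ⟨Real.sin ω, hmem⟩ hlb)
end
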